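/- For all τ, z in the stated domain, the following infinite product identity holds: −2y ∏_{n≥1} (1−q^n)² (1−y⁻²q^{n−1}) (1−ωy⁻²q^{n−1}) (1−ω²y⁻²q^{n−1}) (1−y²q^n) (1−ωy²q^n) (1−ω²y²q^n) / [ (1+y⁻¹q^{n−1})² (1+ωy⁻¹q^{n−1}) (1+ω²y⁻¹q^{n−1}) (1+yq^n)² (1+ωyq^n) (1+ω²yq^n) ] = −2i · η(τ)³ θ₁(3τ,6z) / ( θ₂(τ,z) θ₂(3τ,3z) ). (This is the identity establishing that the graded trace attached to the class 6A of the umbral group G⁽⁴⁾ equals the umbral meromorphic Jacobi form ψ⁽⁴⁾_{6A}.) -/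

import Mathlib

open Complex

/-- Dedekind eta function via its infinite product:
    `η(τ) = e^{πiτ/12} ∏_{n≥1} (1 − e^{2πinτ})`. -/
noncomputable def Eta (τ : ℂ) : ℂ :=
  Complex.exp (Real.pi * Complex.I * τ / 12) *
    ∏' n : ℕ, (1 - Complex.exp (2 * Real.pi * Complex.I * ((n : ℂ) + 1) * τ))

/-- Jacobi theta function `θ₁` via its triple product expansion. -/
noncomputable def Theta1 (τ w : ℂ) : ℂ :=
  -Complex.I * Complex.exp (Real.pi * Complex.I * τ / 4) *
    Complex.exp (Real.pi * Complex.I * w) *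
    ∏' n : ℕ,
      ((1 - Complex.exp (-(2 * Real.pi * Complex.I * w)) *
            Complex.exp (2 * Real.pi * Complex.I * (n : ℂ) * τ)) *
       (1 - Complex.exp (2 * Real.pi * Complex.I * w) *
            Complex.exp (2 * Real.pi * Complex.I * ((n : ℂ) + 1) * τ)) *
       (1 - Complex.exp (2 * Real.pi * Complex.I * ((n : ℂ) + 1) * τ)))

/-- Jacobi theta function `θ₂` via its triple product expansion. -/
noncomputable def Theta2 (τ w : ℂ) : ℂ :=
  Complex.exp (Real.pi * Complex.I * τ / 4) *
    Complex.exp (Real.pi * Complex.I * w) *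
    ∏' n : ℕ,
      ((1 + Complex.exp (-(2 * Real.pi * Complex.I * w)) *
            Complex.exp (2 * Real.pi * Complex.I * (n : ℂ) * τ)) *
       (1 + Complex.exp (2 * Real.pi * Complex.I * w) *
            Complex.exp (2 * Real.pi * Complex.I * ((n : ℂ) + 1) * τ)) *
       (1 - Complex.exp (2 * Real.pi * Complex.I * ((n : ℂ) + 1) * τ)))

/-- A primitive cube root of unity, `ω = e^{2πi/3}`. -/
noncomputable def omega3 : ℂ := Complex.exp (2 * Real.pi * Complex.I / 3)

section aux

lemma hasProd_zero_of_eq_zero {f : ℕ → ℂ} (k : ℕ) (h : f k = 0) : HasProd f 0 := by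
  have : ∀ᶠ s : Finset ℕ in Filter.atTop, ∏ i ∈ s, f i = 0 := by
    filter_upwards [Filter.eventually_ge_atTop {k}] with s hs
    exact Finset.prod_eq_zero (hs (Finset.mem_singleton_self k)) h
  exact Filter.Tendsto.congr' (this.mono fun s hs => hs.symm) tendsto_const_nhds

lemma summable_log_one_add (c w : ℂ) (hw : ‖w‖ < 1) :
    Summable (fun n : ℕ => Complex.log (1 + c * w ^ n)) := by
  have hg : Summable (fun n : ℕ => (3/2 : ℝ) * (‖c‖ * ‖w‖ ^ n)) :=
    ((summable_geometric_of_lt_one (norm_nonneg w) hw).mul_left _).mul_left _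
  apply Summable.of_norm_bounded_eventually_nat hg
  have h0 : Filter.Tendsto (fun n : ℕ => ‖c‖ * ‖w‖ ^ n) Filter.atTop (nhds 0) := by
    simpa using (tendsto_pow_atTop_nhds_zero_of_norm_lt_one
      (by simpa using hw)).const_mul ‖c‖
  filter_upwards [h0.eventually_le_const (by norm_num : (0:ℝ) < 1/2)] with n hn
  have hcw : ‖c * w ^ n‖ ≤ 1/2 := by
    simpa [norm_mul, norm_pow] using hn
  calc ‖Complex.log (1 + c * w ^ n)‖ ≤ 3/2 * ‖c * w ^ n‖ :=
        Complex.norm_log_one_add_half_le_self hcw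
    _ = 3/2 * (‖c‖ * ‖w‖ ^ n) := by rw [norm_mul, norm_pow]

lemma multipliable_one_add (c w : ℂ) (hw : ‖w‖ < 1) :
    Multipliable (fun n : ℕ => 1 + c * w ^ n) := by
  by_cases h : ∀ n : ℕ, 1 + c * w ^ n ≠ 0
  · exact Complex.multipliable_of_summable_log (summable_log_one_add c w hw)
  · push_neg at h
    obtain ⟨k, hk⟩ := h
    exact ⟨0, hasProd_zero_of_eq_zero k hk⟩

lemma tprod_one_add_ne_zero (c w : ℂ) (hc : ‖c‖ < 1) (hw : ‖w‖ < 1) :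
    (∏' n : ℕ, (1 + c * w ^ n)) ≠ 0 := by
  have hne : ∀ n : ℕ, 1 + c * w ^ n ≠ 0 := by
    intro n h0
    have : ‖c * w ^ n‖ < 1 := by
      rw [norm_mul, norm_pow]
      calc ‖c‖ * ‖w‖ ^ n ≤ ‖c‖ * 1 :=
            mul_le_mul_of_nonneg_left (pow_le_one₀ (norm_nonneg w) hw.le) (norm_nonneg c)
        _ < 1 := by simpa using hc
    rw [add_eq_zero_iff_eq_neg] at h0
    rw [show c * w ^ n = -(1:ℂ) by rw [h0]; ring] at this
    simp at this
  have key := Complex.cexp_tsum_eq_tprod (f := fun n => 1 + c * w ^ n)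
    hne (summable_log_one_add c w hw)
  have := key
  rw [← this]
  exact Complex.exp_ne_zero _

lemma factor_ne_zero (c w : ℂ) (hc : ‖c‖ < 1) (hw : ‖w‖ ≤ 1) (n : ℕ) :
    1 + c * w ^ n ≠ 0 := by
  intro h0
  have h : ‖c * w ^ n‖ < 1 := by
    rw [norm_mul, norm_pow]
    calc ‖c‖ * ‖w‖ ^ n ≤ ‖c‖ * 1 :=
          mul_le_mul_of_nonneg_left (pow_le_one₀ (norm_nonneg w) hw) (norm_nonneg c)
      _ < 1 := by simpa using hc
  rw [add_eq_zero_iff_eq_neg] at h0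
  rw [show c * w ^ n = -(1:ℂ) by rw [h0]; ring] at h
  simp at h

lemma hasProd_div {f g : ℕ → ℂ} {P Q : ℂ} (hf : HasProd f P) (hg : HasProd g Q)
    (hQ : Q ≠ 0) : HasProd (fun n => f n / g n) (P / Q) := by
  have := Filter.Tendsto.div hf hg hQ
  apply this.congr
  intro s
  exact (Finset.prod_div_distrib _ _).symm

lemma omega3_cube : omega3 ^ 3 = 1 := by
  rw [omega3, ← Complex.exp_nat_mul]
  rw [show (3:ℕ) * (2 * Real.pi * Complex.I / 3) = 2 * Real.pi * Complex.I by push_cast; ring]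
  exact Complex.exp_two_pi_mul_I

lemma omega3_ne_one : omega3 ≠ 1 := by
  rw [omega3]
  simp only [ne_eq, Complex.exp_eq_one_iff]
  push_neg
  intro n h
  have hI : (2 * Real.pi * Complex.I : ℂ) ≠ 0 := by
    simp [Real.pi_ne_zero, Complex.I_ne_zero]
  have h3 : (2 * Real.pi * Complex.I : ℂ) * 1 = (2 * Real.pi * Complex.I) * (3 * n) := by
    linear_combination 3 * h
  have := mul_left_cancel₀ hI h3
  have : ((1 : ℤ) : ℂ) = ((3 * n : ℤ) : ℂ) := by push_cast; exact this
  have := Int.cast_injective this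
  omega

lemma omega3_sum : omega3 ^ 2 + omega3 + 1 = 0 := by
  have h1 : (omega3 - 1) * (omega3 ^ 2 + omega3 + 1) = 0 := by
    linear_combination omega3_cube
  rcases mul_eq_zero.mp h1 with h2 | h2
  · exact absurd (sub_eq_zero.mp h2) omega3_ne_one
  · exact h2

lemma cube_diff (x : ℂ) : (1 - x) * (1 - omega3 * x) * (1 - omega3 ^ 2 * x) = 1 - x ^ 3 := by
  linear_combination (x ^ 2 - x) * omega3_sum + (x ^ 2 - x ^ 3) * omega3_cube

lemma cube_sum (x : ℂ) : (1 + x) * (1 + omega3 * x) * (1 + omega3 ^ 2 * x) = 1 + x ^ 3 := by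
  linear_combination (x + x ^ 2) * omega3_sum + (x ^ 2 + x ^ 3) * omega3_cube

lemma omega3_norm : ‖omega3‖ = 1 := by
  rw [omega3, Complex.norm_exp]
  rw [show (2 * Real.pi * Complex.I / 3 : ℂ).re = 0 by
    simp [Complex.div_re, Complex.mul_re, Complex.mul_im]]
  exact Real.exp_zero

end aux

/-- Umbral moonshine product identity for the class 6A of G⁽⁴⁾: the graded trace equals ψ⁽⁴⁾_{6A}. -/
theorem stmt_12 (τ z : ℂ) (h1 : 0 < -z.im) (h2 : -z.im < τ.im)
    (q y : ℂ)
    (hq : q = Complex.exp (2 * Real.pi * Complex.I * τ))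
    (hy : y = Complex.exp (2 * Real.pi * Complex.I * z)) :
    -2 * y * (∏' n : ℕ,
      ((1 - q ^ (n + 1)) ^ 2 * (1 - y⁻¹ ^ 2 * q ^ n) * (1 - omega3 * y⁻¹ ^ 2 * q ^ n) *
          (1 - omega3 ^ 2 * y⁻¹ ^ 2 * q ^ n) * (1 - y ^ 2 * q ^ (n + 1)) *
          (1 - omega3 * y ^ 2 * q ^ (n + 1)) * (1 - omega3 ^ 2 * y ^ 2 * q ^ (n + 1)) /
        ((1 + y⁻¹ * q ^ n) ^ 2 * (1 + omega3 * y⁻¹ * q ^ n) *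
          (1 + omega3 ^ 2 * y⁻¹ * q ^ n) * (1 + y * q ^ (n + 1)) ^ 2 *
          (1 + omega3 * y * q ^ (n + 1)) * (1 + omega3 ^ 2 * y * q ^ (n + 1)))))
    = -2 * Complex.I * (Eta τ) ^ 3 * Theta1 (3 * τ) (6 * z) /
        (Theta2 τ z * Theta2 (3 * τ) (3 * z)) := by
  have hpi := Real.pi_pos
  -- basic norm facts
  have hq1 : ‖q‖ < 1 := by
    rw [hq, Complex.norm_exp, Real.exp_lt_one_iff]
    simp only [mul_re, mul_im, I_re, I_im, ofReal_re, ofReal_im, re_ofNat, im_ofNat]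
    nlinarith
  have hyinv : ‖y⁻¹‖ < 1 := by
    rw [hy, ← Complex.exp_neg, Complex.norm_exp, Real.exp_lt_one_iff]
    simp only [neg_re, mul_re, mul_im, I_re, I_im, ofReal_re, ofReal_im, re_ofNat, im_ofNat]
    nlinarith
  have hyq : ‖y * q‖ < 1 := by
    rw [hy, hq, ← Complex.exp_add, Complex.norm_exp, Real.exp_lt_one_iff]
    simp only [add_re, mul_re, mul_im, I_re, I_im, ofReal_re, ofReal_im, re_ofNat, im_ofNat]
    nlinarith
  have hy0 : y ≠ 0 := by rw [hy]; exact Complex.exp_ne_zero _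
  have hq3 : ‖q ^ 3‖ < 1 := by
    rw [norm_pow]; exact pow_lt_one₀ (norm_nonneg q) hq1 (by norm_num)
  have hnq : ‖-q‖ < 1 := by rwa [norm_neg]
  have hnq3 : ‖-q ^ 3‖ < 1 := by rwa [norm_neg]
  have hyinv3 : ‖y⁻¹ ^ 3‖ < 1 := by
    rw [norm_pow]; exact pow_lt_one₀ (norm_nonneg _) hyinv (by norm_num)
  have hy3q3 : ‖y ^ 3 * q ^ 3‖ < 1 := by
    rw [show y ^ 3 * q ^ 3 = (y * q) ^ 3 by ring, norm_pow]
    exact pow_lt_one₀ (norm_nonneg _) hyq (by norm_num)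
  -- multipliability of the atoms
  have Me : Multipliable (fun n : ℕ => 1 + -q * q ^ n) := multipliable_one_add _ _ hq1
  have M2a : Multipliable (fun n : ℕ =>
      (1 + y⁻¹ * q ^ n) * (1 + y * q * q ^ n) * (1 + -q * q ^ n)) :=
    ((multipliable_one_add _ _ hq1).mul (multipliable_one_add _ _ hq1)).mul
      (multipliable_one_add _ _ hq1)
  have M2b : Multipliable (fun n : ℕ =>
      (1 + y⁻¹ ^ 3 * (q ^ 3) ^ n) * (1 + y ^ 3 * q ^ 3 * (q ^ 3) ^ n) *
        (1 + -q ^ 3 * (q ^ 3) ^ n)) :=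
    ((multipliable_one_add _ _ hq3).mul (multipliable_one_add _ _ hq3)).mul
      (multipliable_one_add _ _ hq3)
  have M1 : Multipliable (fun n : ℕ =>
      (1 + -y⁻¹ ^ 6 * (q ^ 3) ^ n) * (1 + -(y ^ 6 * q ^ 3) * (q ^ 3) ^ n) *
        (1 + -q ^ 3 * (q ^ 3) ^ n)) :=
    ((multipliable_one_add _ _ hq3).mul (multipliable_one_add _ _ hq3)).mul
      (multipliable_one_add _ _ hq3)
  -- nonvanishing of the theta denominators
  have hPa : (∏' n : ℕ, ((1 + y⁻¹ * q ^ n) * (1 + y * q * q ^ n) * (1 + -q * q ^ n))) ≠ 0 := by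
    rw [Multipliable.tprod_mul ((multipliable_one_add _ _ hq1).mul (multipliable_one_add _ _ hq1))
      (multipliable_one_add _ _ hq1),
      Multipliable.tprod_mul (multipliable_one_add _ _ hq1) (multipliable_one_add _ _ hq1)]
    exact mul_ne_zero (mul_ne_zero (tprod_one_add_ne_zero _ _ hyinv hq1)
      (tprod_one_add_ne_zero _ _ hyq hq1)) (tprod_one_add_ne_zero _ _ hnq hq1)
  have hPb : (∏' n : ℕ, ((1 + y⁻¹ ^ 3 * (q ^ 3) ^ n) * (1 + y ^ 3 * q ^ 3 * (q ^ 3) ^ n) *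
      (1 + -q ^ 3 * (q ^ 3) ^ n))) ≠ 0 := by
    rw [Multipliable.tprod_mul ((multipliable_one_add _ _ hq3).mul (multipliable_one_add _ _ hq3))
      (multipliable_one_add _ _ hq3),
      Multipliable.tprod_mul (multipliable_one_add _ _ hq3) (multipliable_one_add _ _ hq3)]
    exact mul_ne_zero (mul_ne_zero (tprod_one_add_ne_zero _ _ hyinv3 hq3)
      (tprod_one_add_ne_zero _ _ hy3q3 hq3)) (tprod_one_add_ne_zero _ _ hnq3 hq3)
  -- exponent helper equalities
  have en : ∀ n : ℕ, Complex.exp (2 * (Real.pi:ℂ) * Complex.I * (n : ℂ) * τ) = q ^ n := by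
    intro n; rw [hq, ← Complex.exp_nat_mul]; congr 1; ring
  have en1 : ∀ n : ℕ,
      Complex.exp (2 * (Real.pi:ℂ) * Complex.I * ((n : ℂ) + 1) * τ) = q ^ (n + 1) := by
    intro n; rw [hq, ← Complex.exp_nat_mul]; congr 1; push_cast; ring
  have e3n : ∀ n : ℕ,
      Complex.exp (2 * (Real.pi:ℂ) * Complex.I * (n : ℂ) * (3 * τ)) = (q ^ 3) ^ n := by
    intro n; rw [hq, ← pow_mul, ← Complex.exp_nat_mul]; congr 1; push_cast; ring
  have e3n1 : ∀ n : ℕ,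
      Complex.exp (2 * (Real.pi:ℂ) * Complex.I * ((n : ℂ) + 1) * (3 * τ)) =
        q ^ 3 * (q ^ 3) ^ n := by
    intro n
    rw [show q ^ 3 * (q ^ 3) ^ n = q ^ (3 * (n + 1)) by ring, hq, ← Complex.exp_nat_mul]
    congr 1; push_cast; ring
  have ezinv : Complex.exp (-(2 * (Real.pi:ℂ) * Complex.I * z)) = y⁻¹ := by
    rw [hy, ← Complex.exp_neg]
  have ez3inv : Complex.exp (-(2 * (Real.pi:ℂ) * Complex.I * (3 * z))) = y⁻¹ ^ 3 := by
    rw [hy, ← Complex.exp_neg, ← Complex.exp_nat_mul]; congr 1; push_cast; ring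
  have ez3 : Complex.exp (2 * (Real.pi:ℂ) * Complex.I * (3 * z)) = y ^ 3 := by
    rw [hy, ← Complex.exp_nat_mul]; congr 1; push_cast; ring
  have ez6inv : Complex.exp (-(2 * (Real.pi:ℂ) * Complex.I * (6 * z))) = y⁻¹ ^ 6 := by
    rw [hy, ← Complex.exp_neg, ← Complex.exp_nat_mul]; congr 1; push_cast; ring
  have ez6 : Complex.exp (2 * (Real.pi:ℂ) * Complex.I * (6 * z)) = y ^ 6 := by
    rw [hy, ← Complex.exp_nat_mul]; congr 1; push_cast; ring
  -- rewriting the classical functions in q, y form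
  have hEta : Eta τ = Complex.exp ((Real.pi:ℂ) * Complex.I * τ / 12) *
      ∏' n : ℕ, (1 + -q * q ^ n) := by
    rw [Eta]
    congr 1
    apply tprod_congr
    intro n
    rw [en1 n]; ring
  have hT2a : Theta2 τ z = Complex.exp ((Real.pi:ℂ) * Complex.I * τ / 4) *
      Complex.exp ((Real.pi:ℂ) * Complex.I * z) *
      ∏' n : ℕ, ((1 + y⁻¹ * q ^ n) * (1 + y * q * q ^ n) * (1 + -q * q ^ n)) := by
    rw [Theta2]
    congr 1
    apply tprod_congr
    intro n
    rw [en n, en1 n, ezinv, ← hy]; ring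
  have hT2b : Theta2 (3 * τ) (3 * z) = Complex.exp ((Real.pi:ℂ) * Complex.I * (3 * τ) / 4) *
      Complex.exp ((Real.pi:ℂ) * Complex.I * (3 * z)) *
      ∏' n : ℕ, ((1 + y⁻¹ ^ 3 * (q ^ 3) ^ n) * (1 + y ^ 3 * q ^ 3 * (q ^ 3) ^ n) *
        (1 + -q ^ 3 * (q ^ 3) ^ n)) := by
    rw [Theta2]
    congr 1
    apply tprod_congr
    intro n
    rw [e3n n, e3n1 n, ez3inv, ez3]; ring
  have hT1 : Theta1 (3 * τ) (6 * z) = -Complex.I *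
      Complex.exp ((Real.pi:ℂ) * Complex.I * (3 * τ) / 4) *
      Complex.exp ((Real.pi:ℂ) * Complex.I * (6 * z)) *
      ∏' n : ℕ, ((1 + -y⁻¹ ^ 6 * (q ^ 3) ^ n) * (1 + -(y ^ 6 * q ^ 3) * (q ^ 3) ^ n) *
        (1 + -q ^ 3 * (q ^ 3) ^ n)) := by
    rw [Theta1]
    congr 1
    apply tprod_congr
    intro n
    rw [e3n n, e3n1 n, ez6inv, ez6]; ring
  -- the termwise identity
  have hterm : ∀ n : ℕ,
      (1 - q ^ (n + 1)) ^ 2 * (1 - y⁻¹ ^ 2 * q ^ n) * (1 - omega3 * y⁻¹ ^ 2 * q ^ n) *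
          (1 - omega3 ^ 2 * y⁻¹ ^ 2 * q ^ n) * (1 - y ^ 2 * q ^ (n + 1)) *
          (1 - omega3 * y ^ 2 * q ^ (n + 1)) * (1 - omega3 ^ 2 * y ^ 2 * q ^ (n + 1)) /
        ((1 + y⁻¹ * q ^ n) ^ 2 * (1 + omega3 * y⁻¹ * q ^ n) *
          (1 + omega3 ^ 2 * y⁻¹ * q ^ n) * (1 + y * q ^ (n + 1)) ^ 2 *
          (1 + omega3 * y * q ^ (n + 1)) * (1 + omega3 ^ 2 * y * q ^ (n + 1)))
      = ((1 + -q * q ^ n) * (1 + -q * q ^ n) * (1 + -q * q ^ n) *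
          ((1 + -y⁻¹ ^ 6 * (q ^ 3) ^ n) * (1 + -(y ^ 6 * q ^ 3) * (q ^ 3) ^ n) *
            (1 + -q ^ 3 * (q ^ 3) ^ n))) /
        ((1 + y⁻¹ * q ^ n) * (1 + y * q * q ^ n) * (1 + -q * q ^ n) *
          ((1 + y⁻¹ ^ 3 * (q ^ 3) ^ n) * (1 + y ^ 3 * q ^ 3 * (q ^ 3) ^ n) *
            (1 + -q ^ 3 * (q ^ 3) ^ n))) := by
    intro n
    have hωnorm : ‖omega3 * y⁻¹‖ < 1 := by rw [norm_mul, omega3_norm, one_mul]; exact hyinv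
    have hω2norm : ‖omega3 ^ 2 * y⁻¹‖ < 1 := by
      rw [norm_mul, norm_pow, omega3_norm, one_pow, one_mul]; exact hyinv
    have hωyq : ‖omega3 * (y * q)‖ < 1 := by rw [norm_mul, omega3_norm, one_mul]; exact hyq
    have hω2yq : ‖omega3 ^ 2 * (y * q)‖ < 1 := by
      rw [norm_mul, norm_pow, omega3_norm, one_pow, one_mul]; exact hyq
    have hC : 1 + y⁻¹ * q ^ n ≠ 0 := factor_ne_zero y⁻¹ q hyinv hq1.le n
    have hωC : 1 + omega3 * y⁻¹ * q ^ n ≠ 0 :=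
      factor_ne_zero (omega3 * y⁻¹) q hωnorm hq1.le n
    have hω2C : 1 + omega3 ^ 2 * y⁻¹ * q ^ n ≠ 0 :=
      factor_ne_zero (omega3 ^ 2 * y⁻¹) q hω2norm hq1.le n
    have hD : 1 + y * q ^ (n + 1) ≠ 0 := by
      have := factor_ne_zero (y * q) q hyq hq1.le n
      rwa [show y * q * q ^ n = y * q ^ (n + 1) by ring] at this
    have hωD : 1 + omega3 * y * q ^ (n + 1) ≠ 0 := by
      have := factor_ne_zero (omega3 * (y * q)) q hωyq hq1.le n
      rwa [show omega3 * (y * q) * q ^ n = omega3 * y * q ^ (n + 1) by ring] at this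
    have hω2D : 1 + omega3 ^ 2 * y * q ^ (n + 1) ≠ 0 := by
      have := factor_ne_zero (omega3 ^ 2 * (y * q)) q hω2yq hq1.le n
      rwa [show omega3 ^ 2 * (y * q) * q ^ n = omega3 ^ 2 * y * q ^ (n + 1) by ring] at this
    have hE : 1 + -q * q ^ n ≠ 0 := factor_ne_zero (-q) q hnq hq1.le n
    have hb1 : 1 + y⁻¹ ^ 3 * (q ^ 3) ^ n ≠ 0 := factor_ne_zero _ _ hyinv3 hq3.le n
    have hb2 : 1 + y ^ 3 * q ^ 3 * (q ^ 3) ^ n ≠ 0 := factor_ne_zero _ _ hy3q3 hq3.le n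
    have hb3 : 1 + -q ^ 3 * (q ^ 3) ^ n ≠ 0 := factor_ne_zero _ _ hnq3 hq3.le n
    have hC3 : 1 + (y⁻¹ * q ^ n) ^ 3 ≠ 0 := by
      rw [show (y⁻¹ * q ^ n) ^ 3 = y⁻¹ ^ 3 * (q ^ 3) ^ n by ring]; exact hb1
    have hD3 : 1 + (y * q ^ (n + 1)) ^ 3 ≠ 0 := by
      rw [show (y * q ^ (n + 1)) ^ 3 = y ^ 3 * q ^ 3 * (q ^ 3) ^ n by ring]; exact hb2
    have hNum : (1 - q ^ (n + 1)) ^ 2 * (1 - y⁻¹ ^ 2 * q ^ n) *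
        (1 - omega3 * y⁻¹ ^ 2 * q ^ n) * (1 - omega3 ^ 2 * y⁻¹ ^ 2 * q ^ n) *
        (1 - y ^ 2 * q ^ (n + 1)) * (1 - omega3 * y ^ 2 * q ^ (n + 1)) *
        (1 - omega3 ^ 2 * y ^ 2 * q ^ (n + 1)) =
        (1 - q ^ (n + 1)) ^ 2 * (1 - (y⁻¹ ^ 2 * q ^ n) ^ 3) *
          (1 - (y ^ 2 * q ^ (n + 1)) ^ 3) := by
      have hA := cube_diff (y⁻¹ ^ 2 * q ^ n)
      have hB := cube_diff (y ^ 2 * q ^ (n + 1))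
      linear_combination ((1 - q ^ (n + 1)) ^ 2 * ((1 - y⁻¹ ^ 2 * q ^ n) *
          (1 - omega3 * (y⁻¹ ^ 2 * q ^ n)) * (1 - omega3 ^ 2 * (y⁻¹ ^ 2 * q ^ n)))) * hB +
        ((1 - q ^ (n + 1)) ^ 2 * (1 - (y ^ 2 * q ^ (n + 1)) ^ 3)) * hA
    have hDen : (1 + y⁻¹ * q ^ n) ^ 2 * (1 + omega3 * y⁻¹ * q ^ n) *
        (1 + omega3 ^ 2 * y⁻¹ * q ^ n) * (1 + y * q ^ (n + 1)) ^ 2 *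
        (1 + omega3 * y * q ^ (n + 1)) * (1 + omega3 ^ 2 * y * q ^ (n + 1)) =
        (1 + y⁻¹ * q ^ n) * (1 + (y⁻¹ * q ^ n) ^ 3) * (1 + y * q ^ (n + 1)) *
          (1 + (y * q ^ (n + 1)) ^ 3) := by
      have hCe := cube_sum (y⁻¹ * q ^ n)
      have hDe := cube_sum (y * q ^ (n + 1))
      linear_combination ((1 + y⁻¹ * q ^ n) * (1 + y * q ^ (n + 1)) *
          ((1 + y⁻¹ * q ^ n) * (1 + omega3 * (y⁻¹ * q ^ n)) *
            (1 + omega3 ^ 2 * (y⁻¹ * q ^ n)))) * hDe +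
        ((1 + y⁻¹ * q ^ n) * (1 + y * q ^ (n + 1)) * (1 + (y * q ^ (n + 1)) ^ 3)) * hCe
    have ha2 : 1 + y * q * q ^ n ≠ 0 := factor_ne_zero (y * q) q hyq hq1.le n
    have dnz1 := mul_ne_zero (mul_ne_zero (mul_ne_zero hC hC3) hD) hD3
    have dnz2 := mul_ne_zero (mul_ne_zero (mul_ne_zero hC ha2) hE)
      (mul_ne_zero (mul_ne_zero hb1 hb2) hb3)
    rw [hNum, hDen, div_eq_div_iff dnz1 dnz2]
    ring
  -- split products
  have MR : Multipliable (fun n : ℕ => (1 + -q * q ^ n) * (1 + -q * q ^ n) * (1 + -q * q ^ n) *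
      ((1 + -y⁻¹ ^ 6 * (q ^ 3) ^ n) * (1 + -(y ^ 6 * q ^ 3) * (q ^ 3) ^ n) *
        (1 + -q ^ 3 * (q ^ 3) ^ n))) := ((Me.mul Me).mul Me).mul M1
  have MAB : Multipliable (fun n : ℕ =>
      ((1 + y⁻¹ * q ^ n) * (1 + y * q * q ^ n) * (1 + -q * q ^ n)) *
      ((1 + y⁻¹ ^ 3 * (q ^ 3) ^ n) * (1 + y ^ 3 * q ^ 3 * (q ^ 3) ^ n) *
        (1 + -q ^ 3 * (q ^ 3) ^ n))) := M2a.mul M2b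
  have hQ0 : (∏' n : ℕ,
      (((1 + y⁻¹ * q ^ n) * (1 + y * q * q ^ n) * (1 + -q * q ^ n)) *
      ((1 + y⁻¹ ^ 3 * (q ^ 3) ^ n) * (1 + y ^ 3 * q ^ 3 * (q ^ 3) ^ n) *
        (1 + -q ^ 3 * (q ^ 3) ^ n)))) ≠ 0 := by
    rw [Multipliable.tprod_mul M2a M2b]; exact mul_ne_zero hPa hPb
  have hProdL := (tprod_congr hterm).trans
    (hasProd_div MR.hasProd MAB.hasProd hQ0).tprod_eq
  rw [hEta, hT1, hT2a, hT2b, hProdL, Multipliable.tprod_mul M2a M2b,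
    Multipliable.tprod_mul ((Me.mul Me).mul Me) M1, Multipliable.tprod_mul (Me.mul Me) Me, Multipliable.tprod_mul Me Me]
  -- now a scalar computation
  have ea4 : Complex.exp ((Real.pi:ℂ) * Complex.I * τ / 4) =
      Complex.exp ((Real.pi:ℂ) * Complex.I * τ / 12) ^ 3 := by
    rw [← Complex.exp_nat_mul]; congr 1; push_cast; ring
  have ea34 : Complex.exp ((Real.pi:ℂ) * Complex.I * (3 * τ) / 4) =
      Complex.exp ((Real.pi:ℂ) * Complex.I * τ / 12) ^ 9 := by
    rw [← Complex.exp_nat_mul]; congr 1; push_cast; ring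
  have eb2 : y = Complex.exp ((Real.pi:ℂ) * Complex.I * z) ^ 2 := by
    rw [hy, ← Complex.exp_nat_mul]; congr 1; push_cast; ring
  have eb3 : Complex.exp ((Real.pi:ℂ) * Complex.I * (3 * z)) =
      Complex.exp ((Real.pi:ℂ) * Complex.I * z) ^ 3 := by
    rw [← Complex.exp_nat_mul]; congr 1; push_cast; ring
  have eb6 : Complex.exp ((Real.pi:ℂ) * Complex.I * (6 * z)) =
      Complex.exp ((Real.pi:ℂ) * Complex.I * z) ^ 6 := by
    rw [← Complex.exp_nat_mul]; congr 1; push_cast; ring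
  set a := Complex.exp ((Real.pi:ℂ) * Complex.I * τ / 12) with ha
  set b := Complex.exp ((Real.pi:ℂ) * Complex.I * z) with hb
  set Pe := (∏' n : ℕ, (1 + -q * q ^ n)) with hPe
  set P1 := (∏' n : ℕ, ((1 + -y⁻¹ ^ 6 * (q ^ 3) ^ n) * (1 + -(y ^ 6 * q ^ 3) * (q ^ 3) ^ n) *
    (1 + -q ^ 3 * (q ^ 3) ^ n))) with hP1
  set Pa := (∏' n : ℕ, ((1 + y⁻¹ * q ^ n) * (1 + y * q * q ^ n) * (1 + -q * q ^ n))) with hPA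
  set Pb := (∏' n : ℕ, ((1 + y⁻¹ ^ 3 * (q ^ 3) ^ n) * (1 + y ^ 3 * q ^ 3 * (q ^ 3) ^ n) *
    (1 + -q ^ 3 * (q ^ 3) ^ n))) with hPB
  rw [ea4, ea34, eb2, eb3, eb6]
  have hI := Complex.I_sq
  field_simp
  have ha0 : a ≠ 0 := by rw [ha]; exact Complex.exp_ne_zero _
  have hb0 : b ≠ 0 := by rw [hb]; exact Complex.exp_ne_zero _
  rw [eq_div_iff (by
    exact ha0)]
  linear_combination (-(b ^ 2 * Pe ^ 3 * P1 * a)) * hI
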